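/- In NC_A(n,d), the two-sided ideal m generated by T_1,...,T_n is nilpotent: m^{1+l} = 0, where l = n(n-1)/2 + d + n - 2 is the length of the unique longest word T_{w'_∘} T_n^{d-1} T_{n-1} ⋯ T_1 (with w'_∘ the longest element of S_n). -/

import Mathlib

/-- Relations of the generalized nil-Coxeter algebra `NC_A(n,d)` on generators
`T_1, …, T_n` (0-indexed by `Fin n`): type-`A_n` braid relations,
`T_i^2 = 0` for `i < n`, and `T_n^d = 0`. -/
inductive NCRel (k : Type) [CommRing k] (n d : ℕ) :
    FreeAlgebra k (Fin n) → FreeAlgebra k (Fin n) → Prop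
  | braid (i j : Fin n) (h : (i : ℕ) + 1 = j) :
      NCRel k n d (FreeAlgebra.ι k i * FreeAlgebra.ι k j * FreeAlgebra.ι k i)
        (FreeAlgebra.ι k j * FreeAlgebra.ι k i * FreeAlgebra.ι k j)
  | comm (i j : Fin n) (h : (i : ℕ) + 1 < j) :
      NCRel k n d (FreeAlgebra.ι k i * FreeAlgebra.ι k j)
        (FreeAlgebra.ι k j * FreeAlgebra.ι k i)
  | sq (i : Fin n) (h : (i : ℕ) + 1 < n) : NCRel k n d (FreeAlgebra.ι k i ^ 2) 0
  | last (i : Fin n) (h : (i : ℕ) + 1 = n) : NCRel k n d (FreeAlgebra.ι k i ^ d) 0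

/-- The generalized nil-Coxeter algebra `NC_A(n,d)`. -/
abbrev NCA (k : Type) [CommRing k] (n d : ℕ) := RingQuot (NCRel k n d)

/-- The generator `T_j` (1-indexed, for `1 ≤ j ≤ n`) of `NC_A(n,d)`. -/
noncomputable def Tg (k : Type) [CommRing k] (n d : ℕ) (j : ℕ) : NCA k n d :=
  if h : 1 ≤ j ∧ j ≤ n then
    RingQuot.mkAlgHom k (NCRel k n d) (FreeAlgebra.ι k ⟨j - 1, by omega⟩) else 1

/-- The descending product `T_{n-1} T_{n-2} ⋯ T_m` in `NC_A(n,d)`. -/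
noncomputable def descT (k : Type) [CommRing k] (n d : ℕ) (m : ℕ) : NCA k n d :=
  ((List.range' m (n - m)).reverse.map (Tg k n d)).prod

/-- The product of generators `T_{j}` along a (1-indexed) word `l`. -/
noncomputable def TwOf (k : Type) [CommRing k] (n d : ℕ) (l : List ℕ) : NCA k n d :=
  (l.map (Tg k n d)).prod

/-- The simple transposition `s_j = (j, j+1)` (1-indexed) in the symmetric group
on `{1, …, n}`, realized as `Equiv.Perm (Fin n)`. -/
def sp (n : ℕ) (j : ℕ) : Equiv.Perm (Fin n) :=
  if h : 1 ≤ j ∧ j < n then Equiv.swap ⟨j - 1, by omega⟩ ⟨j, h.2⟩ else 1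

/-- `l` is a reduced word for `w ∈ S_n` in the simple transpositions `s_1, …, s_{n-1}`. -/
def IsRedWord (n : ℕ) (w : Equiv.Perm (Fin n)) (l : List ℕ) : Prop :=
  (∀ j ∈ l, 1 ≤ j ∧ j < n) ∧ (l.map (sp n)).prod = w ∧
    ∀ l' : List ℕ, (∀ j ∈ l', 1 ≤ j ∧ j < n) → (l'.map (sp n)).prod = w →
      l.length ≤ l'.length

section Rels
variable (k : Type) [CommRing k] (n d : ℕ)

theorem Tg_def (j : ℕ) (h1 : 1 ≤ j) (h2 : j ≤ n) :
    Tg k n d j = RingQuot.mkAlgHom k (NCRel k n d) (FreeAlgebra.ι k ⟨j - 1, by omega⟩) := by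
  rw [Tg, dif_pos ⟨h1, h2⟩]

theorem Tsq (j : ℕ) (h1 : 1 ≤ j) (h2 : j < n) : Tg k n d j * Tg k n d j = 0 := by
  rw [Tg_def k n d j h1 (le_of_lt h2), ← map_mul, ← sq]
  have := RingQuot.mkAlgHom_rel k (NCRel.sq (k := k) (n := n) (d := d) ⟨j - 1, by omega⟩ (by show j - 1 + 1 < n; omega))
  rw [this, map_zero]

theorem Tlast (h1 : 1 ≤ n) : Tg k n d n ^ d = 0 := by
  rw [Tg_def k n d n h1 le_rfl, ← map_pow]
  have := RingQuot.mkAlgHom_rel k (NCRel.last (k := k) (n := n) (d := d) ⟨n - 1, by omega⟩ (by show n - 1 + 1 = n; omega))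
  rw [this, map_zero]

theorem Tbraid (i : ℕ) (h1 : 1 ≤ i) (h2 : i + 1 ≤ n) :
    Tg k n d i * Tg k n d (i+1) * Tg k n d i
      = Tg k n d (i+1) * Tg k n d i * Tg k n d (i+1) := by
  rw [Tg_def k n d i h1 (by omega), Tg_def k n d (i+1) (by omega) h2, ← map_mul, ← map_mul,
    ← map_mul, ← map_mul]
  exact RingQuot.mkAlgHom_rel k
    (NCRel.braid (k := k) (n := n) (d := d) ⟨i - 1, by omega⟩ ⟨i + 1 - 1, by omega⟩ (by show i - 1 + 1 = i + 1 - 1; omega))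

theorem Tcomm (i j : ℕ) (h1 : 1 ≤ i) (h2 : i + 1 < j) (h3 : j ≤ n) :
    Tg k n d i * Tg k n d j = Tg k n d j * Tg k n d i := by
  rw [Tg_def k n d i h1 (by omega), Tg_def k n d j (by omega) h3, ← map_mul, ← map_mul]
  exact RingQuot.mkAlgHom_rel k
    (NCRel.comm (k := k) (n := n) (d := d) ⟨i - 1, by omega⟩ ⟨j - 1, by omega⟩ (by show i - 1 + 1 < j - 1; omega))

end Rels


/-- The descending run `[N, N-1, …, m]` (empty if `m > N`). -/
def runW (N m : ℕ) : List ℕ := (List.range' m (N + 1 - m)).reverse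

/-- Word of the body `D_1 ⋯ D_N`, where `rs = [a_N, …, a_1]` lists run bottoms. -/
def bodyW : ℕ → List ℕ → List ℕ
  | _, [] => []
  | 0, _ :: _ => []
  | N+1, a :: rs => bodyW N rs ++ runW (N+1) a

/-- Validity of a run-bottom list at level `N`. -/
def GoodB : ℕ → List ℕ → Prop
  | 0, [] => True
  | N+1, a :: rs => 1 ≤ a ∧ a ≤ N + 2 ∧ GoodB N rs
  | _, _ => False

/-- Right multiplication of a normal body by `T_j`. -/
def mulB : ℕ → List ℕ → ℕ → Option (List ℕ)
  | 0, _, _ => none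
  | _+1, [], _ => none
  | N+1, a :: rs, j =>
    if a = N + 2 then
      if j = N + 1 then some ((N+1) :: rs)
      else (mulB N rs j).map (a :: ·)
    else
      if j + 1 < a then (mulB N rs j).map (a :: ·)
      else if j + 1 = a then some ((a-1) :: rs)
      else if j = a then none
      else (mulB N rs (j-1)).map (a :: ·)

/-- All-empty run-bottom list. -/
def emptyRS : ℕ → List ℕ
  | 0 => []
  | N+1 => (N+2) :: emptyRS N

/-- Right multiplication of a full normal form by `T_j`. -/
def mulTop (n d c m : ℕ) (rs : List ℕ) (j : ℕ) : Option (ℕ × ℕ × List ℕ) :=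
  if c = 0 then
    if j = n then some (1, n, rs)
    else (mulB (n-1) rs j).map fun rs' => (0, n, rs')
  else
    if j = n then
      if m = n then (if c + 1 = d then none else some (c+1, n, rs))
      else if 2 ≤ c then none
      else (mulB (n-1) rs (n-1)).map fun rs' => (1, m, rs')
    else
      if j + 1 < m then (mulB (n-1) rs j).map fun rs' => (c, m, rs')
      else if j + 1 = m then some (c, m-1, rs)
      else if j = m then none
      else (mulB (n-1) rs (j-1)).map fun rs' => (c, m, rs')

/-- The normal-form word. -/
def nfW (n c m : ℕ) (rs : List ℕ) : List ℕ :=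
  bodyW (n-1) rs ++ List.replicate c n ++ runW (n-1) m

/-- Validity of full normal-form data. -/
def GoodNF (n d c m : ℕ) (rs : List ℕ) : Prop :=
  GoodB (n-1) rs ∧ 1 ≤ m ∧ m ≤ n ∧ c ≤ d - 1 ∧ (c = 0 → m = n)

theorem runW_eq_nil (N m : ℕ) (h : N < m) : runW N m = [] := by
  simp [runW, Nat.sub_eq_zero_of_le h]

theorem runW_length (N m : ℕ) : (runW N m).length = N + 1 - m := by simp [runW]

theorem mem_runW {N m p : ℕ} (h : p ∈ runW N m) : m ≤ p ∧ p ≤ N := by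
  simp only [runW, List.mem_reverse, List.mem_range'_1] at h
  omega

theorem runW_split (N a m : ℕ) (h1 : m ≤ a + 1) (h2 : a ≤ N) :
    runW N m = runW N (a+1) ++ runW a m := by
  rw [runW, runW, runW, ← List.reverse_append]
  have : List.range' m (a+1-m) ++ List.range' (m + (a+1-m)) (N-a) = List.range' m (N-a + (a+1-m)) := by
    rw [List.range'_append_1]; congr 1; omega
  rw [show m + (a+1-m) = a+1 from by omega] at this
  rw [show N + 1 - m = N - a + (a + 1 - m) from by omega, ← this,
    show N + 1 - (a+1) = N - a from by omega]

theorem runW_self (N : ℕ) : runW N N = [N] := by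
  simp [runW, List.range']

theorem runW_extend (N m : ℕ) (h1 : 1 ≤ m) (h2 : m ≤ N + 1) :
    runW N m ++ [m-1] = runW N (m-1) := by
  rw [runW_split N (m-1) (m-1) (by omega) (by omega)]
  congr 1
  rw [show m - 1 + 1 = m from by omega]
  rw [runW_self]

theorem GoodB_length {N : ℕ} {rs : List ℕ} (h : GoodB N rs) : rs.length = N := by
  induction N generalizing rs with
  | zero => cases rs with | nil => rfl | cons a rs => exact absurd h (by simp [GoodB])
  | succ N ih => cases rs with
    | nil => exact absurd h (by simp [GoodB])
    | cons a rs => simp [GoodB] at h; simp [ih h.2.2]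

theorem bodyW_length_le {N : ℕ} {rs : List ℕ} (h : GoodB N rs) :
    (bodyW N rs).length ≤ N * (N+1) / 2 := by
  induction N generalizing rs with
  | zero => cases rs with | nil => simp [bodyW] | cons a rs => exact absurd h (by simp [GoodB])
  | succ N ih => cases rs with
    | nil => exact absurd h (by simp [GoodB])
    | cons a rs =>
      obtain ⟨h1, h2, h3⟩ := h
      have := ih h3
      have hr := runW_length (N+1) a
      have harith : (N+1) * (N+1+1) / 2 = N * (N+1) / 2 + (N+1) := by
        have : (N+1) * (N+1+1) = N * (N+1) + (N+1) * 2 := by ring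
        omega
      simp only [bodyW, List.length_append]
      omega

theorem GoodB_emptyRS (N : ℕ) : GoodB N (emptyRS N) := by
  induction N with
  | zero => trivial
  | succ N ih => exact ⟨by omega, le_rfl, ih⟩

theorem bodyW_emptyRS (N : ℕ) : bodyW N (emptyRS N) = [] := by
  induction N with
  | zero => rfl
  | succ N ih => simp [emptyRS, bodyW, ih, runW_eq_nil (N+1) (N+2) (by omega)]

theorem nfW_length {rs : List ℕ} (n c m : ℕ) (hn : 1 ≤ n) : (nfW n c m rs).length = (bodyW (n-1) rs).length + c + (n - m) := by
  simp [nfW, runW_length]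
  omega

theorem nfW_length_le {n d c m : ℕ} {rs : List ℕ} (hn : 1 ≤ n) (hd : 2 ≤ d)
    (h : GoodNF n d c m rs) : (nfW n c m rs).length ≤ n * (n-1) / 2 + d + n - 2 := by
  obtain ⟨hb, h1, h2, h3, h4⟩ := h
  have := bodyW_length_le hb
  have : (n-1) * (n-1+1) / 2 = n * (n-1) / 2 := by
    congr 1
    rw [show n - 1 + 1 = n from by omega]
    ring
  rw [nfW_length _ _ _ hn]
  omega
section WordLemmas
variable (k : Type) [CommRing k] (n d : ℕ)

theorem TwOf_nil : TwOf k n d [] = 1 := rfl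

theorem TwOf_append (u v : List ℕ) : TwOf k n d (u ++ v) = TwOf k n d u * TwOf k n d v := by
  simp [TwOf]

theorem TwOf_cons (j : ℕ) (w : List ℕ) : TwOf k n d (j :: w) = Tg k n d j * TwOf k n d w := by
  simp [TwOf]

theorem TwOf_singleton (j : ℕ) : TwOf k n d [j] = Tg k n d j := by simp [TwOf]

theorem TwOf_replicate (c j : ℕ) : TwOf k n d (List.replicate c j) = Tg k n d j ^ c := by
  induction c with
  | zero => simp [TwOf]
  | succ c ih => rw [List.replicate_succ, TwOf_cons, ih, ← pow_succ']

theorem comm_list_right {w : List ℕ} {j : ℕ} (hj : 1 ≤ j)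
    (hw : ∀ p ∈ w, j + 1 < p ∧ p ≤ n) :
    TwOf k n d w * Tg k n d j = Tg k n d j * TwOf k n d w := by
  induction w with
  | nil => simp [TwOf]
  | cons p w ih =>
    have hp := hw p (by simp)
    rw [TwOf_cons, mul_assoc, ih (fun q hq => hw q (by simp [hq])), ← mul_assoc,
      ← Tcomm k n d j p hj hp.1 hp.2, mul_assoc]

theorem comm_list_left {w : List ℕ} {p : ℕ} (hp : p ≤ n)
    (hw : ∀ q ∈ w, 1 ≤ q ∧ q + 1 < p) :
    Tg k n d p * TwOf k n d w = TwOf k n d w * Tg k n d p := by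
  induction w with
  | nil => simp [TwOf]
  | cons q w ih =>
    have hq := hw q (by simp)
    rw [TwOf_cons]
    calc Tg k n d p * (Tg k n d q * TwOf k n d w)
        = Tg k n d q * (Tg k n d p * TwOf k n d w) := by
          rw [← mul_assoc, ← Tcomm k n d q p hq.1 hq.2 hp, mul_assoc]
      _ = Tg k n d q * TwOf k n d w * Tg k n d p := by
          rw [ih (fun r hr => hw r (by simp [hr])), ← mul_assoc]

theorem run_comm_low {N m j : ℕ} (hj : 1 ≤ j) (hjm : j + 1 < m) (hN : N ≤ n) :
    TwOf k n d (runW N m) * Tg k n d j = Tg k n d j * TwOf k n d (runW N m) :=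
  comm_list_right k n d hj (fun p hp => ⟨lt_of_lt_of_le hjm (mem_runW hp).1,
    le_trans (mem_runW hp).2 hN⟩)

theorem run_extend {N m : ℕ} (h1 : 2 ≤ m) (h2 : m ≤ N + 1) :
    TwOf k n d (runW N m) * Tg k n d (m-1) = TwOf k n d (runW N (m-1)) := by
  rw [← runW_extend N m (by omega) h2, TwOf_append, TwOf_singleton]

theorem run_kill {N m : ℕ} (h1 : 1 ≤ m) (h2 : m ≤ N) (h3 : N ≤ n - 1) :
    TwOf k n d (runW N m) * Tg k n d m = 0 := by
  rw [runW_split N m m (by omega) h2, TwOf_append, runW_self, TwOf_singleton, mul_assoc,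
    Tsq k n d m h1 (by omega), mul_zero]

theorem run_slide {N m j : ℕ} (h1 : 1 ≤ m) (h2 : m < j) (h3 : j ≤ N) (h4 : N ≤ n - 1) :
    TwOf k n d (runW N m) * Tg k n d j = Tg k n d (j-1) * TwOf k n d (runW N m) := by
  have e2 : runW j m = [j] ++ runW (j-1) m := by
    have h := runW_split j (j-1) m (by omega) (by omega)
    rwa [show j - 1 + 1 = j from by omega, runW_self] at h
  have e3 : runW (j-1) m = [j-1] ++ runW (j-2) m := by
    have h := runW_split (j-1) (j-2) m (by omega) (by omega)
    rwa [show j - 2 + 1 = j - 1 from by omega, runW_self] at h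
  have hsplit : runW N m = runW N (j+1) ++ ([j] ++ ([j-1] ++ runW (j-2) m)) := by
    rw [runW_split N j m (by omega) h3, e2, e3]
  have hB : TwOf k n d (runW (j-2) m) * Tg k n d j = Tg k n d j * TwOf k n d (runW (j-2) m) :=
    (comm_list_left k n d (by omega) (fun q hq => ⟨le_trans h1 (mem_runW hq).1,
      by have := (mem_runW hq).2; omega⟩)).symm
  have hA : TwOf k n d (runW N (j+1)) * Tg k n d (j-1)
      = Tg k n d (j-1) * TwOf k n d (runW N (j+1)) :=
    comm_list_right k n d (by omega) (fun p hp => ⟨by have := (mem_runW hp).1; omega,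
      by have := (mem_runW hp).2; omega⟩)
  have hbr : Tg k n d (j-1) * Tg k n d j * Tg k n d (j-1)
      = Tg k n d j * Tg k n d (j-1) * Tg k n d j := by
    have := Tbraid k n d (j-1) (by omega) (by omega)
    rwa [show j - 1 + 1 = j from by omega] at this
  set A := TwOf k n d (runW N (j+1))
  set B := TwOf k n d (runW (j-2) m)
  set t := Tg k n d j
  set s := Tg k n d (j-1)
  rw [hsplit, TwOf_append, TwOf_append, TwOf_append, TwOf_singleton, TwOf_singleton]
  calc A * (t * (s * B)) * t
      = A * t * s * (B * t) := by noncomm_ring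
    _ = A * t * s * (t * B) := by rw [hB]
    _ = A * (t * s * t) * B := by noncomm_ring
    _ = A * (s * t * s) * B := by rw [← hbr]
    _ = A * s * (t * (s * B)) := by noncomm_ring
    _ = s * A * (t * (s * B)) := by rw [hA]
    _ = s * (A * (t * (s * B))) := by rw [mul_assoc]

end WordLemmas
section MulB
variable (k : Type) [CommRing k] (n d : ℕ)

/-- Soundness of `mulB`. -/
theorem mulB_sound : ∀ {N : ℕ}, N ≤ n - 1 → ∀ {rs : List ℕ}, GoodB N rs →
    ∀ {j : ℕ}, 1 ≤ j → j ≤ N →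
    (mulB N rs j = none → TwOf k n d (bodyW N rs) * Tg k n d j = 0) ∧
    (∀ rs', mulB N rs j = some rs' →
      TwOf k n d (bodyW N rs) * Tg k n d j = TwOf k n d (bodyW N rs') ∧
      GoodB N rs' ∧ (bodyW N rs').length = (bodyW N rs).length + 1) := by
  intro N
  induction N with
  | zero => intro _ rs _ j hj1 hj2; omega
  | succ N ih =>
    intro hN rs hg j hj1 hj2
    cases rs with
    | nil => exact absurd hg (by simp [GoodB])
    | cons a rs =>
      obtain ⟨ha1, ha2, hg'⟩ : 1 ≤ a ∧ a ≤ N + 2 ∧ GoodB N rs := hg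
      by_cases hae : a = N + 2
      · -- empty top run
        have hrun : runW (N+1) a = [] := runW_eq_nil _ _ (by omega)
        by_cases hj : j = N + 1
        · have hmul : mulB (N+1) (a :: rs) j = some ((N+1) :: rs) := by
            simp [mulB, hae, hj]
          constructor
          · intro hnone
            rw [hmul] at hnone; simp at hnone
          · intro rs' hsome
            rw [hmul, Option.some_inj] at hsome
            subst hsome
            refine ⟨?_, ⟨by omega, by omega, hg'⟩, ?_⟩
            · rw [bodyW, bodyW, hrun, List.append_nil, TwOf_append, runW_self, TwOf_singleton, hj]
            · simp [bodyW, hrun, runW_length]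
        · -- recurse
          have hj2' : j ≤ N := by omega
          have ihs := ih (by omega) hg' hj1 hj2'
          have hb : bodyW (N+1) (a :: rs) = bodyW N rs := by rw [bodyW, hrun, List.append_nil]
          have hmul : mulB (N+1) (a :: rs) j = (mulB N rs j).map (a :: ·) := by
            simp [mulB, hae, hj]
          constructor
          · intro hnone
            rw [hmul] at hnone
            cases hcase : mulB N rs j with
            | none => rw [hb]; exact ihs.1 hcase
            | some rs' => rw [hcase] at hnone; simp at hnone
          · intro rs' hsome
            rw [hmul] at hsome
            cases hcase : mulB N rs j with
            | none => rw [hcase] at hsome; simp at hsome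
            | some rs0 =>
              rw [hcase] at hsome
              simp only [Option.map_some, Option.some_inj] at hsome
              subst hsome
              obtain ⟨he, hgd, hl⟩ := ihs.2 rs0 hcase
              have hb' : bodyW (N+1) (a :: rs0) = bodyW N rs0 := by
                rw [bodyW, hrun, List.append_nil]
              exact ⟨by rw [hb, hb', he], ⟨ha1, ha2, hgd⟩, by rw [hb, hb', hl]⟩
      · -- nonempty top run, a ≤ N+1
        have haN : a ≤ N + 1 := by omega
        have hb : bodyW (N+1) (a :: rs) = bodyW N rs ++ runW (N+1) a := rfl
        by_cases hlow : j + 1 < a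
        · -- commute below the run, recurse
          have hcomm := run_comm_low k n d hj1 hlow (show N + 1 ≤ n by omega)
          have hj2' : j ≤ N := by omega
          have ihs := ih (by omega) hg' hj1 hj2'
          have hmul : mulB (N+1) (a :: rs) j = (mulB N rs j).map (a :: ·) := by
            simp [mulB, hae, hlow]
          have key : ∀ rs0, TwOf k n d (bodyW (N+1) (a :: rs0))
              = TwOf k n d (bodyW N rs0) * TwOf k n d (runW (N+1) a) := by
            intro rs0; rw [bodyW, TwOf_append]
          have hstep : TwOf k n d (bodyW (N+1) (a :: rs)) * Tg k n d j
              = (TwOf k n d (bodyW N rs) * Tg k n d j) * TwOf k n d (runW (N+1) a) := by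
            rw [key, mul_assoc, hcomm, ← mul_assoc]
          constructor
          · intro hnone
            rw [hmul] at hnone
            cases hcase : mulB N rs j with
            | none => rw [hstep, (ihs.1 hcase), zero_mul]
            | some rs' => rw [hcase] at hnone; simp at hnone
          · intro rs' hsome
            rw [hmul] at hsome
            cases hcase : mulB N rs j with
            | none => rw [hcase] at hsome; simp at hsome
            | some rs0 =>
              rw [hcase] at hsome
              simp only [Option.map_some, Option.some_inj] at hsome
              subst hsome
              obtain ⟨he, hgd, hl⟩ := ihs.2 rs0 hcase
              refine ⟨by rw [hstep, he, key], ⟨ha1, ha2, hgd⟩, ?_⟩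
              simp only [bodyW, List.length_append]
              omega
        · by_cases hext : j + 1 = a
          · -- extend the run
            have hmul : mulB (N+1) (a :: rs) j = some ((a-1) :: rs) := by
              simp [mulB, hae, hlow, hext]
            constructor
            · intro hnone; rw [hmul] at hnone; simp at hnone
            · intro rs' hsome
              rw [hmul, Option.some_inj] at hsome
              subst hsome
              refine ⟨?_, ⟨by omega, by omega, hg'⟩, ?_⟩
              · have hext' : j = a - 1 := by omega
                rw [hb, TwOf_append, mul_assoc, bodyW, TwOf_append, hext',
                  run_extend k n d (show 2 ≤ a by omega) (show a ≤ (N+1) + 1 by omega)]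
              · simp only [bodyW, List.length_append, runW_length]; omega
          · by_cases hkill : j = a
            · -- square: zero
              have hmul : mulB (N+1) (a :: rs) j = none := by
                simp [mulB, hae, hlow, hext, hkill]
              constructor
              · intro _
                rw [hb, TwOf_append, mul_assoc, hkill,
                  run_kill k n d ha1 haN (by omega), mul_zero]
              · intro rs' hsome; rw [hmul] at hsome; simp at hsome
            · -- slide: a < j ≤ N+1
              have hgt : a < j := by omega
              have hslide := run_slide k n d ha1 hgt hj2 hN
              have hj1' : 1 ≤ j - 1 := by omega
              have hj2' : j - 1 ≤ N := by omega
              have ihs := ih (by omega) hg' hj1' hj2'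
              have hmul : mulB (N+1) (a :: rs) j = (mulB N rs (j-1)).map (a :: ·) := by
                simp [mulB, hae, hlow, hext, hkill]
              have hstep : TwOf k n d (bodyW (N+1) (a :: rs)) * Tg k n d j
                  = (TwOf k n d (bodyW N rs) * Tg k n d (j-1)) * TwOf k n d (runW (N+1) a) := by
                rw [hb, TwOf_append, mul_assoc, hslide, ← mul_assoc]
              constructor
              · intro hnone
                rw [hmul] at hnone
                cases hcase : mulB N rs (j-1) with
                | none => rw [hstep, (ihs.1 hcase), zero_mul]
                | some rs' => rw [hcase] at hnone; simp at hnone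
              · intro rs' hsome
                rw [hmul] at hsome
                cases hcase : mulB N rs (j-1) with
                | none => rw [hcase] at hsome; simp at hsome
                | some rs0 =>
                  rw [hcase] at hsome
                  simp only [Option.map_some, Option.some_inj] at hsome
                  subst hsome
                  obtain ⟨he, hgd, hl⟩ := ihs.2 rs0 hcase
                  refine ⟨?_, ⟨ha1, ha2, hgd⟩, ?_⟩
                  · rw [hstep, he, bodyW, TwOf_append]
                  · simp only [bodyW, List.length_append]; omega

end MulB
section MulTop
variable (k : Type) [CommRing k] (n d : ℕ)

theorem nfW_eq (c m : ℕ) (rs : List ℕ) :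
    TwOf k n d (nfW n c m rs)
      = TwOf k n d (bodyW (n-1) rs) * Tg k n d n ^ c * TwOf k n d (runW (n-1) m) := by
  rw [nfW, TwOf_append, TwOf_append, TwOf_replicate]

theorem commE {i : ℕ} (h1 : 1 ≤ i) (h2 : i + 1 < n) (c : ℕ) :
    Tg k n d i * Tg k n d n ^ c = Tg k n d n ^ c * Tg k n d i :=
  Commute.pow_right (Tcomm k n d i n h1 h2 le_rfl) c

theorem TnTnT (hn2 : 2 ≤ n) :
    Tg k n d n * (Tg k n d n * (Tg k n d (n-1) * Tg k n d n)) = 0 := by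
  have hbr : Tg k n d (n-1) * Tg k n d n * Tg k n d (n-1)
      = Tg k n d n * Tg k n d (n-1) * Tg k n d n := by
    have := Tbraid k n d (n-1) (by omega) (by omega)
    rwa [show n - 1 + 1 = n from by omega] at this
  have hsq := Tsq k n d (n-1) (by omega) (by omega)
  calc Tg k n d n * (Tg k n d n * (Tg k n d (n-1) * Tg k n d n))
      = Tg k n d n * (Tg k n d n * Tg k n d (n-1) * Tg k n d n) := by noncomm_ring
    _ = Tg k n d n * (Tg k n d (n-1) * Tg k n d n * Tg k n d (n-1)) := by rw [← hbr]
    _ = (Tg k n d n * Tg k n d (n-1) * Tg k n d n) * Tg k n d (n-1) := by noncomm_ring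
    _ = (Tg k n d (n-1) * Tg k n d n * Tg k n d (n-1)) * Tg k n d (n-1) := by rw [← hbr]
    _ = Tg k n d (n-1) * Tg k n d n * (Tg k n d (n-1) * Tg k n d (n-1)) := by noncomm_ring
    _ = 0 := by rw [hsq, mul_zero]

theorem mulTop_sound (hn : 1 ≤ n) (hd : 2 ≤ d) {c m : ℕ} {rs : List ℕ}
    (hg : GoodNF n d c m rs) {j : ℕ} (hj1 : 1 ≤ j) (hj2 : j ≤ n) :
    (mulTop n d c m rs j = none → TwOf k n d (nfW n c m rs) * Tg k n d j = 0) ∧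
    (∀ c' m' rs', mulTop n d c m rs j = some (c', m', rs') →
      TwOf k n d (nfW n c m rs) * Tg k n d j = TwOf k n d (nfW n c' m' rs') ∧
      GoodNF n d c' m' rs' ∧ (nfW n c' m' rs').length = (nfW n c m rs).length + 1) := by
  obtain ⟨hgb, hm1, hm2, hc, hc0⟩ := hg
  by_cases hc' : c = 0
  · subst hc'
    have hm : m = n := hc0 rfl
    have hRnil : runW (n-1) m = [] := runW_eq_nil _ _ (by omega)
    have hP : TwOf k n d (nfW n 0 m rs) = TwOf k n d (bodyW (n-1) rs) := by
      rw [nfW_eq, hRnil, pow_zero, TwOf_nil, mul_one, mul_one]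
    by_cases hj : j = n
    · have hmul : mulTop n d 0 m rs j = some (1, n, rs) := by simp [mulTop, hj]
      refine ⟨fun hnone => by rw [hmul] at hnone; simp at hnone, ?_⟩
      intro c' m' rs' hsome
      rw [hmul, Option.some_inj] at hsome
      simp only [Prod.mk.injEq] at hsome
      obtain ⟨rfl, rfl, rfl⟩ := hsome
      refine ⟨?_, ⟨hgb, by omega, le_rfl, by omega, by omega⟩, ?_⟩
      · rw [hP, nfW_eq, runW_eq_nil _ _ (by omega), TwOf_nil, mul_one, pow_one, hj]
      · rw [nfW_length _ _ _ hn, nfW_length _ _ _ hn]; omega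
    · -- recurse into body
      have hjn : j ≤ n - 1 := by omega
      have ihs := mulB_sound k n d (le_refl (n-1)) hgb hj1 hjn
      have hmul : mulTop n d 0 m rs j = (mulB (n-1) rs j).map fun rs' => (0, n, rs') := by
        simp [mulTop, hj]
      constructor
      · intro hnone
        rw [hmul] at hnone
        cases hcase : mulB (n-1) rs j with
        | none => rw [hP]; exact ihs.1 hcase
        | some rs0 => rw [hcase] at hnone; simp at hnone
      · intro c' m' rs' hsome
        rw [hmul] at hsome
        cases hcase : mulB (n-1) rs j with
        | none => rw [hcase] at hsome; simp at hsome
        | some rs0 =>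
          rw [hcase] at hsome
          simp only [Option.map_some, Option.some_inj, Prod.mk.injEq] at hsome
          obtain ⟨rfl, rfl, rfl⟩ := hsome
          obtain ⟨he, hgd, hl⟩ := ihs.2 rs0 hcase
          refine ⟨?_, ⟨hgd, by omega, le_rfl, by omega, by omega⟩, ?_⟩
          · rw [hP, he, nfW_eq, runW_eq_nil _ _ (by omega), pow_zero, TwOf_nil, mul_one, mul_one]
          · rw [nfW_length _ _ _ hn, nfW_length _ _ _ hn]
            omega
  · -- c ≥ 1
    have hc1 : 1 ≤ c := by omega
    by_cases hj : j = n
    · by_cases hmn : m = n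
      · have hRnil : runW (n-1) m = [] := runW_eq_nil _ _ (by omega)
        have hW : TwOf k n d (nfW n c m rs)
            = TwOf k n d (bodyW (n-1) rs) * Tg k n d n ^ c := by
          rw [nfW_eq, hRnil, TwOf_nil, mul_one]
        by_cases hcd : c + 1 = d
        · have hmul : mulTop n d c m rs j = none := by simp [mulTop, hc', hj, hmn, hcd]
          refine ⟨fun _ => ?_, fun c' m' rs' hsome => by rw [hmul] at hsome; simp at hsome⟩
          rw [hW, hj, mul_assoc, ← pow_succ, hcd, Tlast k n d hn, mul_zero]
        · have hmul : mulTop n d c m rs j = some (c+1, n, rs) := by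
            simp [mulTop, hc', hj, hmn, hcd]
          refine ⟨fun hnone => by rw [hmul] at hnone; simp at hnone, ?_⟩
          intro c' m' rs' hsome
          rw [hmul, Option.some_inj] at hsome
          simp only [Prod.mk.injEq] at hsome
          obtain ⟨rfl, rfl, rfl⟩ := hsome
          refine ⟨?_, ⟨hgb, by omega, le_rfl, by omega, by omega⟩, ?_⟩
          · rw [hW, hj, mul_assoc, ← pow_succ, nfW_eq, runW_eq_nil _ _ (by omega),
              TwOf_nil, mul_one]
          · rw [nfW_length _ _ _ hn, nfW_length _ _ _ hn]; omega
      · -- m < n, j = n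
        have hmn' : m ≤ n - 1 := by omega
        have hn2 : 2 ≤ n := by omega
        have hsplitR : runW (n-1) m = [n-1] ++ runW (n-2) m := by
          have h := runW_split (n-1) (n-2) m (by omega) (by omega)
          rwa [show n - 2 + 1 = n - 1 from by omega, runW_self] at h
        set P := TwOf k n d (bodyW (n-1) rs) with hPdef
        set R' := TwOf k n d (runW (n-2) m) with hR'def
        set t := Tg k n d n with htdef
        set s := Tg k n d (n-1) with hsdef
        have hcommR' : t * R' = R' * t :=
          comm_list_left k n d le_rfl (fun q hq => ⟨le_trans hm1 (mem_runW hq).1,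
            by have := (mem_runW hq).2; omega⟩)
        have base : TwOf k n d (nfW n c m rs) * Tg k n d j
            = P * (t ^ c * (s * (t * R'))) := by
          rw [hj, nfW_eq, hsplitR, TwOf_append, TwOf_singleton]
          calc P * t ^ c * (s * R') * t = P * (t ^ c * (s * (R' * t))) := by noncomm_ring
            _ = P * (t ^ c * (s * (t * R'))) := by rw [hcommR']
        by_cases hc2 : 2 ≤ c
        · have hmul : mulTop n d c m rs j = none := by simp [mulTop, hc', hj, hmn, hc2]
          refine ⟨fun _ => ?_, fun c' m' rs' hsome => by rw [hmul] at hsome; simp at hsome⟩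
          have hE : t ^ c = t ^ (c-2) * (t * t) := by
            rw [← pow_two, ← pow_add]
            congr 1
            omega
          rw [base]
          calc P * (t ^ c * (s * (t * R')))
              = P * (t ^ (c-2) * (t * (t * (s * t))) * R') := by rw [hE]; noncomm_ring
            _ = 0 := by rw [TnTnT k n d hn2, mul_zero, zero_mul, mul_zero]
        · have hcc : c = 1 := by omega
          have hbr : s * t * s = t * s * t := by
            have := Tbraid k n d (n-1) (by omega) (by omega)
            rwa [show n - 1 + 1 = n from by omega] at this
          have hstep : t * (s * (t * R')) = s * (t * (s * R')) := by
            calc t * (s * (t * R')) = t * s * t * R' := by noncomm_ring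
              _ = s * t * s * R' := by rw [← hbr]
              _ = s * (t * (s * R')) := by noncomm_ring
          have ihs := mulB_sound k n d (le_refl (n-1)) hgb (show 1 ≤ n-1 by omega)
            (le_refl (n-1))
          have hmul : mulTop n d c m rs j
              = (mulB (n-1) rs (n-1)).map fun rs' => (1, m, rs') := by
            simp [mulTop, hc', hj, hmn, hc2]
          have base' : TwOf k n d (nfW n c m rs) * Tg k n d j
              = (P * s) * (t * (s * R')) := by
            rw [base, hcc, pow_one, hstep]; noncomm_ring
          constructor
          · intro hnone
            rw [hmul] at hnone
            cases hcase : mulB (n-1) rs (n-1) with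
            | none => rw [base', ihs.1 hcase, zero_mul]
            | some rs0 => rw [hcase] at hnone; simp at hnone
          · intro c' m' rs' hsome
            rw [hmul] at hsome
            cases hcase : mulB (n-1) rs (n-1) with
            | none => rw [hcase] at hsome; simp at hsome
            | some rs0 =>
              rw [hcase] at hsome
              simp only [Option.map_some, Option.some_inj, Prod.mk.injEq] at hsome
              obtain ⟨rfl, rfl, rfl⟩ := hsome
              obtain ⟨he, hgd, hl⟩ := ihs.2 rs0 hcase
              refine ⟨?_, ⟨hgd, hm1, hm2, by omega, by omega⟩, ?_⟩
              · rw [base', he, nfW_eq, hsplitR, TwOf_append, TwOf_singleton, pow_one]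
                noncomm_ring
              · rw [nfW_length _ _ _ hn, nfW_length _ _ _ hn]; omega
    · -- j ≤ n - 1
      have hjn : j ≤ n - 1 := by omega
      have hn2 : 2 ≤ n := by omega
      set P := TwOf k n d (bodyW (n-1) rs) with hPdef
      set R := TwOf k n d (runW (n-1) m) with hRdef
      by_cases hlow : j + 1 < m
      · have hcomm1 : R * Tg k n d j = Tg k n d j * R :=
          run_comm_low k n d hj1 hlow (by omega)
        have hcomm2 : Tg k n d j * Tg k n d n ^ c = Tg k n d n ^ c * Tg k n d j :=
          commE k n d hj1 (by omega) c
        have base : TwOf k n d (nfW n c m rs) * Tg k n d j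
            = (P * Tg k n d j) * Tg k n d n ^ c * R := by
          rw [nfW_eq, mul_assoc, hcomm1, ← mul_assoc, mul_assoc P, ← hcomm2, ← mul_assoc]
        have ihs := mulB_sound k n d (le_refl (n-1)) hgb hj1 hjn
        have hmul : mulTop n d c m rs j
            = (mulB (n-1) rs j).map fun rs' => (c, m, rs') := by
          simp [mulTop, hc', hj, hlow]
        constructor
        · intro hnone
          rw [hmul] at hnone
          cases hcase : mulB (n-1) rs j with
          | none => rw [base, ihs.1 hcase, zero_mul, zero_mul]
          | some rs0 => rw [hcase] at hnone; simp at hnone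
        · intro c' m' rs' hsome
          rw [hmul] at hsome
          cases hcase : mulB (n-1) rs j with
          | none => rw [hcase] at hsome; simp at hsome
          | some rs0 =>
            rw [hcase] at hsome
            simp only [Option.map_some, Option.some_inj, Prod.mk.injEq] at hsome
            obtain ⟨rfl, rfl, rfl⟩ := hsome
            obtain ⟨he, hgd, hl⟩ := ihs.2 rs0 hcase
            refine ⟨?_, ⟨hgd, hm1, hm2, by omega, by omega⟩, ?_⟩
            · rw [base, he, nfW_eq]
            · rw [nfW_length _ _ _ hn, nfW_length _ _ _ hn]; omega
      · by_cases hext : j + 1 = m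
        · have hmul : mulTop n d c m rs j = some (c, m-1, rs) := by
            simp [mulTop, hc', hj, hlow, hext]
          refine ⟨fun hnone => by rw [hmul] at hnone; simp at hnone, ?_⟩
          intro c' m' rs' hsome
          rw [hmul, Option.some_inj] at hsome
          simp only [Prod.mk.injEq] at hsome
          obtain ⟨rfl, rfl, rfl⟩ := hsome
          refine ⟨?_, ⟨hgb, by omega, by omega, by omega, by omega⟩, ?_⟩
          · rw [nfW_eq, nfW_eq, mul_assoc, show j = m - 1 from by omega,
              run_extend k n d (show 2 ≤ m by omega) (show m ≤ (n-1)+1 by omega), mul_assoc]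
          · rw [nfW_length _ _ _ hn, nfW_length _ _ _ hn]; omega
        · by_cases hkill : j = m
          · have hmn : ¬ m = n := fun h => hj (by omega)
            have hmul : mulTop n d c m rs j = none := by
              simp [mulTop, hc', hlow, hext, hkill, hmn]
            refine ⟨fun _ => ?_, fun c' m' rs' hsome => by rw [hmul] at hsome; simp at hsome⟩
            rw [nfW_eq, mul_assoc, hkill, run_kill k n d hm1 (by omega) (le_refl (n-1)),
              mul_zero]
          · have hgt : m < j := by omega
            have hslide := run_slide k n d hm1 hgt hjn (le_refl (n-1))
            have hcomm2 : Tg k n d (j-1) * Tg k n d n ^ c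
                = Tg k n d n ^ c * Tg k n d (j-1) :=
              commE k n d (by omega) (by omega) c
            have base : TwOf k n d (nfW n c m rs) * Tg k n d j
                = (P * Tg k n d (j-1)) * Tg k n d n ^ c * R := by
              rw [nfW_eq, mul_assoc, hslide, ← mul_assoc, mul_assoc P, ← hcomm2, ← mul_assoc]
            have ihs := mulB_sound k n d (le_refl (n-1)) hgb (show 1 ≤ j-1 by omega)
              (show j-1 ≤ n-1 by omega)
            have hmul : mulTop n d c m rs j
                = (mulB (n-1) rs (j-1)).map fun rs' => (c, m, rs') := by
              simp [mulTop, hc', hj, hlow, hext, hkill]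
            constructor
            · intro hnone
              rw [hmul] at hnone
              cases hcase : mulB (n-1) rs (j-1) with
              | none => rw [base, ihs.1 hcase, zero_mul, zero_mul]
              | some rs0 => rw [hcase] at hnone; simp at hnone
            · intro c' m' rs' hsome
              rw [hmul] at hsome
              cases hcase : mulB (n-1) rs (j-1) with
              | none => rw [hcase] at hsome; simp at hsome
              | some rs0 =>
                rw [hcase] at hsome
                simp only [Option.map_some, Option.some_inj, Prod.mk.injEq] at hsome
                obtain ⟨rfl, rfl, rfl⟩ := hsome
                obtain ⟨he, hgd, hl⟩ := ihs.2 rs0 hcase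
                refine ⟨?_, ⟨hgd, hm1, hm2, by omega, by omega⟩, ?_⟩
                · rw [base, he, nfW_eq]
                · rw [nfW_length _ _ _ hn, nfW_length _ _ _ hn]; omega

end MulTop
section Words
variable (k : Type) [CommRing k] (n d : ℕ)

theorem word_nf (hn : 1 ≤ n) (hd : 2 ≤ d) :
    ∀ w : List ℕ, (∀ j ∈ w, 1 ≤ j ∧ j ≤ n) →
    TwOf k n d w = 0 ∨ ∃ c m rs, GoodNF n d c m rs ∧
      TwOf k n d w = TwOf k n d (nfW n c m rs) ∧ (nfW n c m rs).length = w.length := by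
  intro w
  induction w using List.reverseRecOn with
  | nil =>
    intro _
    right
    refine ⟨0, n, emptyRS (n-1), ⟨GoodB_emptyRS _, hn, le_rfl, by omega, fun _ => rfl⟩, ?_, ?_⟩ <;>
      simp [nfW, bodyW_emptyRS, runW_eq_nil (n-1) n (by omega), TwOf_nil]
  | append_singleton w j ih =>
    intro hvalid
    have hw := fun p hp => hvalid p (List.mem_append_left _ hp)
    have hj := hvalid j (by simp)
    rcases ih hw with h0 | ⟨c, m, rs, hg, he, hl⟩
    · left; rw [TwOf_append, h0, zero_mul]
    · have hs := mulTop_sound k n d hn hd hg hj.1 hj.2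
      cases hcase : mulTop n d c m rs j with
      | none =>
        left
        rw [TwOf_append, he, TwOf_singleton, hs.1 hcase]
      | some trip =>
        right
        obtain ⟨c', m', rs'⟩ := trip
        obtain ⟨he', hg', hl'⟩ := hs.2 c' m' rs' hcase
        exact ⟨c', m', rs', hg', by rw [TwOf_append, he, TwOf_singleton, he'],
          by simp [hl', hl]⟩

theorem word_zero (hn : 1 ≤ n) (hd : 2 ≤ d) (w : List ℕ)
    (hvalid : ∀ j ∈ w, 1 ≤ j ∧ j ≤ n)
    (hlen : n * (n - 1) / 2 + d + n - 2 + 1 ≤ w.length) : TwOf k n d w = 0 := by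
  rcases word_nf k n d hn hd w hvalid with h0 | ⟨c, m, rs, hg, he, hl⟩
  · exact h0
  · exfalso
    have := nfW_length_le hn hd hg
    omega

end Words

open scoped Pointwise

/-- In `NC_A(n,d)`, the two-sided ideal `m` generated by `T_1, …, T_n` satisfies
`m^{1+l} = 0` where `l = n(n-1)/2 + d + n - 2` is the length of the unique longest
word: every product of `l + 1` elements of `m` vanishes. -/
theorem NCA_ideal_nilpotent (k : Type) [CommRing k] (n d : ℕ) (hn : 1 ≤ n) (hd : 2 ≤ d)
    (L : List (NCA k n d))
    (hL : ∀ x ∈ L,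
      x ∈ TwoSidedIdeal.span {y : NCA k n d | ∃ j, 1 ≤ j ∧ j ≤ n ∧ y = Tg k n d j})
    (hlen : L.length = (n * (n - 1) / 2 + d + n - 2) + 1) :
    L.prod = 0 := by
  classical
  set V0 : Set (NCA k n d) :=
    {y | ∃ w : List ℕ, (∀ j ∈ w, 1 ≤ j ∧ j ≤ n) ∧ y = TwOf k n d w} with hV0def
  set V1 : Set (NCA k n d) :=
    {y | ∃ w : List ℕ, (∀ j ∈ w, 1 ≤ j ∧ j ≤ n) ∧ w ≠ [] ∧ y = TwOf k n d w} with hV1def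
  have hV0V0 : V0 * V0 ⊆ V0 := by
    rintro x ⟨a, ⟨w1, hw1, rfl⟩, b, ⟨w2, hw2, rfl⟩, rfl⟩
    exact ⟨w1 ++ w2, fun j hj => (List.mem_append.1 hj).elim (hw1 j) (hw2 j),
      (TwOf_append k n d w1 w2).symm⟩
  have htop : ∀ x : NCA k n d, x ∈ Submodule.span k V0 := by
    intro x
    obtain ⟨p, rfl⟩ := RingQuot.mkAlgHom_surjective k (NCRel k n d) x
    induction p using FreeAlgebra.induction with
    | grade0 r =>
      rw [AlgHom.commutes, Algebra.algebraMap_eq_smul_one]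
      exact Submodule.smul_mem _ r (Submodule.subset_span ⟨[], by simp, (TwOf_nil k n d).symm⟩)
    | grade1 i =>
      apply Submodule.subset_span
      refine ⟨[(i : ℕ) + 1], ?_, ?_⟩
      · intro j hj
        simp only [List.mem_singleton] at hj
        subst hj
        exact ⟨by omega, by omega⟩
      · rw [TwOf_singleton, Tg_def k n d ((i : ℕ)+1) (by omega) (by omega)]
        have : (⟨(i : ℕ) + 1 - 1, by omega⟩ : Fin n) = i := Fin.ext (by simp)
        rw [this]
    | mul a b ha hb =>
      rw [map_mul]
      have h := Submodule.mul_mem_mul ha hb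
      rw [Submodule.span_mul_span] at h
      exact Submodule.span_mono hV0V0 h
    | add a b ha hb => rw [map_add]; exact add_mem ha hb
  have hmulV1 : ∀ (x y : NCA k n d), y ∈ Submodule.span k V1 → x * y ∈ Submodule.span k V1 := by
    intro x y hy
    have h := Submodule.mul_mem_mul (htop x) hy
    rw [Submodule.span_mul_span] at h
    refine Submodule.span_mono ?_ h
    rintro z ⟨a, ⟨w1, hw1, rfl⟩, b, ⟨w2, hw2, hne, rfl⟩, rfl⟩
    exact ⟨w1 ++ w2, fun j hj => (List.mem_append.1 hj).elim (hw1 j) (hw2 j),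
      by simp [hne], (TwOf_append k n d w1 w2).symm⟩
  have hmulV1' : ∀ (x y : NCA k n d), x ∈ Submodule.span k V1 → x * y ∈ Submodule.span k V1 := by
    intro x y hx
    have h := Submodule.mul_mem_mul hx (htop y)
    rw [Submodule.span_mul_span] at h
    refine Submodule.span_mono ?_ h
    rintro z ⟨a, ⟨w1, hw1, hne, rfl⟩, b, ⟨w2, hw2, rfl⟩, rfl⟩
    exact ⟨w1 ++ w2, fun j hj => (List.mem_append.1 hj).elim (hw1 j) (hw2 j),
      by simp [hne], (TwOf_append k n d w1 w2).symm⟩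
  set I : TwoSidedIdeal (NCA k n d) := TwoSidedIdeal.mk'
    (Submodule.span k V1 : Set (NCA k n d))
    (Submodule.zero_mem _) (fun ha hb => add_mem ha hb) (fun ha => neg_mem ha)
    (fun {x y} hy => hmulV1 x y hy) (fun {x y} hx => hmulV1' x y hx) with hIdef
  have hJ : ∀ x : NCA k n d,
      x ∈ TwoSidedIdeal.span {y : NCA k n d | ∃ j, 1 ≤ j ∧ j ≤ n ∧ y = Tg k n d j} →
      x ∈ Submodule.span k V1 := by
    intro x hx
    have h := TwoSidedIdeal.mem_span_iff.1 hx I ?_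
    · rwa [hIdef, TwoSidedIdeal.mem_mk'] at h
    · rintro y ⟨j, h1, h2, rfl⟩
      rw [hIdef, SetLike.mem_coe, TwoSidedIdeal.mem_mk']
      exact Submodule.subset_span ⟨[j], by simp [h1, h2], by simp, (TwOf_singleton k n d j).symm⟩
  have key : ∀ M : List (NCA k n d), (∀ x ∈ M, x ∈ Submodule.span k V1) →
      M.prod ∈ Submodule.span k
        {y | ∃ w : List ℕ, (∀ j ∈ w, 1 ≤ j ∧ j ≤ n) ∧ M.length ≤ w.length ∧ y = TwOf k n d w} := by
    intro M
    induction M with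
    | nil =>
      intro _
      exact Submodule.subset_span ⟨[], by simp, by simp, (TwOf_nil k n d).symm⟩
    | cons x M ih =>
      intro hM
      rw [List.prod_cons]
      have hx := hM x (by simp)
      have hMp := ih (fun y hy => hM y (by simp [hy]))
      have h := Submodule.mul_mem_mul hx hMp
      rw [Submodule.span_mul_span] at h
      refine Submodule.span_mono ?_ h
      rintro z ⟨a, ⟨w1, hw1, hne, rfl⟩, b, ⟨w2, hw2, hl2, rfl⟩, rfl⟩
      refine ⟨w1 ++ w2, fun j hj => (List.mem_append.1 hj).elim (hw1 j) (hw2 j), ?_,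
        (TwOf_append k n d w1 w2).symm⟩
      have hw1len : 1 ≤ w1.length := by
        cases w1 with
        | nil => exact absurd rfl hne
        | cons _ _ => simp
      simp only [List.length_cons, List.length_append]
      omega
  have hfin := key L (fun x hx => hJ x (hL x hx))
  have hsub : {y : NCA k n d | ∃ w : List ℕ,
      (∀ j ∈ w, 1 ≤ j ∧ j ≤ n) ∧ L.length ≤ w.length ∧ y = TwOf k n d w}
      ⊆ {(0 : NCA k n d)} := by
    rintro y ⟨w, hw, hlw, rfl⟩
    rw [Set.mem_singleton_iff]
    exact word_zero k n d hn hd w hw (by omega)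
  have hmem := Submodule.span_mono hsub hfin
  have h0 : Submodule.span k ({0} : Set (NCA k n d)) = ⊥ := Submodule.span_zero_singleton k
  rw [h0] at hmem
  exact (Submodule.mem_bot k).1 hmem
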